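/- In the preferential attachment multigraph growth model with parameter θ > 0 on n vertices, conditional on the degree sequence D*(m) = d (with Σ_i d_i = 2m), the multigraph H(m) is distributed as the configuration model CM(d). Equivalently, ℙ[H(m) = G] = (Π_{i=1}^n θ^{(d_i)} / (nθ)^{(2m)}) · (2m)!! / (Π_{1≤i<j≤n} x_{ij}! Π_{i} x_{ii}!!) for every multigraph G = (x_{ij}) with degree sequence d. -/

import Mathlib

open Finset Nat

/-- Rising factorial `x^{(k)} = x (x+1) ⋯ (x+k-1)` for real `x`. -/
noncomputable def riseR (x : ℝ) (k : ℕ) : ℝ := ∏ i ∈ Finset.range k, (x + i)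

/-- Degree of vertex `i` in the multigraph with adjacency matrix `G`
(a loop at `i` contributes `2` via the diagonal entry). -/
def deg {n : ℕ} (G : Fin n → Fin n → ℕ) (i : Fin n) : ℕ := ∑ j, G i j

/-- Add an edge between `i` and `j` (a loop if `i = j`, raising the diagonal
entry by `2`). -/
def addEdge {n : ℕ} (G : Fin n → Fin n → ℕ) (i j : Fin n) : Fin n → Fin n → ℕ :=
  fun p q => G p q + (if (p = i ∧ q = j) ∨ (p = j ∧ q = i) then 1 else 0) +
    (if i = j ∧ p = i ∧ q = i then 1 else 0)

/-- Probability of attaching the new edge at the pair `(i,j)` when the current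
graph `G` has `2m` half-edges, in the preferential attachment growth model. -/
noncomputable def stepProb {n : ℕ} (θ : ℝ) (m : ℕ) (G : Fin n → Fin n → ℕ)
    (i j : Fin n) : ℝ :=
  if i = j then
    ((deg G i : ℝ) + θ) * ((deg G i : ℝ) + θ + 1) /
      ((2 * m + n * θ) * (2 * m + n * θ + 1))
  else
    2 * ((deg G i : ℝ) + θ) * ((deg G j : ℝ) + θ) /
      ((2 * m + n * θ) * (2 * m + n * θ + 1))

/-- `P` is the law of the preferential attachment multigraph growth model:
`P m G` is the probability that the graph after `m` steps equals `G`. -/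
def IsGrowthLaw {n : ℕ} (θ : ℝ) (P : ℕ → (Fin n → Fin n → ℕ) → ℝ) : Prop :=
  (∀ G, P 0 G = if G = fun _ _ => 0 then 1 else 0) ∧
  ∀ m G', P (m + 1) G' =
    ∑' G : Fin n → Fin n → ℕ, P m G *
      ∑ i, ∑ j, (if i ≤ j ∧ G' = addEdge G i j then stepProb θ m G i j else 0)

/-! ### Auxiliary lemmas -/

lemma riseR_succ (x : ℝ) (k : ℕ) : riseR x (k + 1) = riseR x k * (x + k) := by
  simp [riseR, Finset.prod_range_succ]

lemma riseR_pos {x : ℝ} (hx : 0 < x) (k : ℕ) : 0 < riseR x k :=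
  Finset.prod_pos fun i _ => by positivity

/-- Remove an edge between `i` and `j` (inverse of `addEdge`). -/
def remE {n : ℕ} (G : Fin n → Fin n → ℕ) (i j : Fin n) : Fin n → Fin n → ℕ :=
  fun p q => G p q - (if (p = i ∧ q = j) ∨ (p = j ∧ q = i) then 1 else 0) -
    (if i = j ∧ p = i ∧ q = i then 1 else 0)

lemma remE_addEdge {n : ℕ} (G : Fin n → Fin n → ℕ) (i j : Fin n) :
    remE (addEdge G i j) i j = G := by
  funext p q; simp only [remE, addEdge]; split_ifs <;> omega

lemma remE_comm {n : ℕ} (G : Fin n → Fin n → ℕ) (i j : Fin n) :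
    remE G i j = remE G j i := by
  funext p q
  simp only [remE]
  rw [if_congr (show ((p = i ∧ q = j) ∨ (p = j ∧ q = i)) ↔
      ((p = j ∧ q = i) ∨ (p = i ∧ q = j)) by tauto) rfl rfl,
    if_congr (show (i = j ∧ p = i ∧ q = i) ↔ (j = i ∧ p = j ∧ q = j) by
      constructor <;> rintro ⟨rfl, rfl, rfl⟩ <;> exact ⟨rfl, rfl, rfl⟩) rfl rfl]

lemma prod_one_point {n : ℕ} (f g : Fin n → ℝ) (i : Fin n)
    (h : ∀ k, k ≠ i → f k = g k) :
    (∏ k, f k) * g i = (∏ k, g k) * f i := by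
  rw [← Finset.mul_prod_erase univ f (mem_univ i),
    ← Finset.mul_prod_erase univ g (mem_univ i),
    Finset.prod_congr rfl (fun k hk => h k (Finset.mem_erase.1 hk).1)]
  ring

lemma prod_two_point {n : ℕ} (f g : Fin n → ℝ) (i j : Fin n) (hij : i ≠ j)
    (h : ∀ k, k ≠ i → k ≠ j → f k = g k) :
    (∏ k, f k) * (g i * g j) = (∏ k, g k) * (f i * f j) := by
  have hj : j ∈ univ.erase i := Finset.mem_erase.2 ⟨hij.symm, mem_univ j⟩
  rw [← Finset.mul_prod_erase univ f (mem_univ i),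
    ← Finset.mul_prod_erase univ g (mem_univ i),
    ← Finset.mul_prod_erase _ f hj, ← Finset.mul_prod_erase _ g hj,
    Finset.prod_congr rfl (fun k hk => by
      simp only [Finset.mem_erase] at hk
      exact h k hk.2.1 hk.1)]
  ring

lemma sum_one_point {n : ℕ} (f g : Fin n → ℕ) (i : Fin n)
    (h : ∀ k, k ≠ i → f k = g k) :
    (∑ k, f k) + g i = (∑ k, g k) + f i := by
  rw [← Finset.add_sum_erase univ f (mem_univ i),
    ← Finset.add_sum_erase univ g (mem_univ i),
    Finset.sum_congr rfl (fun k hk => h k (Finset.mem_erase.1 hk).1)]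
  ring

lemma sum_two_point {n : ℕ} (f g : Fin n → ℕ) (i j : Fin n) (hij : i ≠ j)
    (h : ∀ k, k ≠ i → k ≠ j → f k = g k) :
    (∑ k, f k) + (g i + g j) = (∑ k, g k) + (f i + f j) := by
  have hj : j ∈ univ.erase i := Finset.mem_erase.2 ⟨hij.symm, mem_univ j⟩
  rw [← Finset.add_sum_erase univ f (mem_univ i),
    ← Finset.add_sum_erase univ g (mem_univ i),
    ← Finset.add_sum_erase _ f hj, ← Finset.add_sum_erase _ g hj,
    Finset.sum_congr rfl (fun k hk => by
      simp only [Finset.mem_erase] at hk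
      exact h k hk.2.1 hk.1)]
  ring

lemma remE_apply {n : ℕ} (G : Fin n → Fin n → ℕ) {i j : Fin n} (hij : i ≠ j)
    (p q : Fin n) :
    remE G i j p q = G p q - (if (p = i ∧ q = j) ∨ (p = j ∧ q = i) then 1 else 0) := by
  simp [remE, hij]

lemma remE_diag_apply {n : ℕ} (G : Fin n → Fin n → ℕ) (i : Fin n) (p q : Fin n) :
    remE G i i p q = G p q - (if p = i ∧ q = i then 2 else 0) := by
  simp only [remE]; split_ifs <;> first | omega | tauto

lemma addEdge_remE_ne {n : ℕ} {G : Fin n → Fin n → ℕ} {i j : Fin n} (hij : i ≠ j)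
    (h1 : 1 ≤ G i j) (h2 : 1 ≤ G j i) : addEdge (remE G i j) i j = G := by
  funext p q
  simp only [addEdge, remE_apply G hij, hij, false_and, if_neg, if_false]
  by_cases hc : (p = i ∧ q = j) ∨ (p = j ∧ q = i)
  · rcases hc with ⟨rfl, rfl⟩ | ⟨rfl, rfl⟩ <;> simp [hij, hij.symm] <;> omega
  · simp [hc]

lemma addEdge_remE_diag {n : ℕ} {G : Fin n → Fin n → ℕ} {i : Fin n}
    (h2 : 2 ≤ G i i) : addEdge (remE G i i) i i = G := by
  funext p q
  simp only [addEdge, remE_diag_apply G i]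
  by_cases hc : p = i ∧ q = i
  · obtain ⟨rfl, rfl⟩ := hc; simp; omega
  · simp [hc]

lemma remE_off_ne {n : ℕ} (G : Fin n → Fin n → ℕ) {i j p : Fin n} (q : Fin n)
    (hpi : p ≠ i) (hpj : p ≠ j) : remE G i j p q = G p q := by
  simp only [remE]
  rw [if_neg (by tauto), if_neg (by tauto)]; omega

lemma deg_remE_off {n : ℕ} (G : Fin n → Fin n → ℕ) {i j k : Fin n}
    (hki : k ≠ i) (hkj : k ≠ j) : deg (remE G i j) k = deg G k :=
  Finset.sum_congr rfl fun q _ => remE_off_ne G q hki hkj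

lemma deg_remE_i {n : ℕ} {G : Fin n → Fin n → ℕ} {i j : Fin n} (hij : i ≠ j)
    (h1 : 1 ≤ G i j) : deg (remE G i j) i + 1 = deg G i := by
  have key : ∀ q, remE G i j i q + (if q = j then 1 else 0) = G i q := by
    intro q
    rw [remE_apply G hij]
    by_cases hq : q = j
    · subst hq; rw [if_pos (Or.inl ⟨rfl, rfl⟩), if_pos rfl]; omega
    · rw [if_neg (by tauto), if_neg hq]; omega
  calc deg (remE G i j) i + 1
      = ∑ q, remE G i j i q + ∑ q, (if q = j then 1 else 0) := by
        rw [Finset.sum_ite_eq' univ j (fun _ => 1)]; simp [deg]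
    _ = ∑ q, (remE G i j i q + (if q = j then 1 else 0)) := by
        rw [Finset.sum_add_distrib]
    _ = deg G i := Finset.sum_congr rfl fun q _ => key q

lemma deg_remE_diag {n : ℕ} {G : Fin n → Fin n → ℕ} {i : Fin n}
    (h2 : 2 ≤ G i i) : deg (remE G i i) i + 2 = deg G i := by
  have key : ∀ q, remE G i i i q + (if q = i then 2 else 0) = G i q := by
    intro q
    rw [remE_diag_apply G i]
    by_cases hq : q = i
    · subst hq; rw [if_pos ⟨rfl, rfl⟩, if_pos rfl]; omega
    · rw [if_neg (by tauto), if_neg hq]; omega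
  calc deg (remE G i i) i + 2
      = ∑ q, remE G i i i q + ∑ q, (if q = i then 2 else 0) := by
        rw [Finset.sum_ite_eq' univ i (fun _ => 2)]; simp [deg]
    _ = ∑ q, (remE G i i i q + (if q = i then 2 else 0)) := by
        rw [Finset.sum_add_distrib]
    _ = deg G i := Finset.sum_congr rfl fun q _ => key q

lemma remE_symm {n : ℕ} {G : Fin n → Fin n → ℕ} (hs : ∀ p q, G p q = G q p)
    (i j p q : Fin n) : remE G i j p q = remE G i j q p := by
  simp only [remE]
  rw [hs p q, if_congr (show ((p = i ∧ q = j) ∨ (p = j ∧ q = i)) ↔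
    ((q = i ∧ p = j) ∨ (q = j ∧ p = i)) by tauto) rfl rfl,
    if_congr (show (i = j ∧ p = i ∧ q = i) ↔ (i = j ∧ q = i ∧ p = i) by tauto) rfl rfl]

lemma step_eq {n : ℕ} (θ : ℝ) (P : ℕ → (Fin n → Fin n → ℕ) → ℝ)
    (hrec : ∀ m G', P (m + 1) G' =
      ∑' G : Fin n → Fin n → ℕ, P m G *
        ∑ i, ∑ j, (if i ≤ j ∧ G' = addEdge G i j then stepProb θ m G i j else 0))
    (m : ℕ) (x : Fin n → Fin n → ℕ) :
    P (m + 1) x = ∑ i, ∑ j, (if i ≤ j ∧ x = addEdge (remE x i j) i j then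
      P m (remE x i j) * stepProb θ m (remE x i j) i j else 0) := by
  rw [hrec m x]
  have h1 : ∀ G : Fin n → Fin n → ℕ, P m G *
      ∑ i, ∑ j, (if i ≤ j ∧ x = addEdge G i j then stepProb θ m G i j else 0)
      = ∑ p ∈ (univ ×ˢ univ : Finset (Fin n × Fin n)),
        (if p.1 ≤ p.2 ∧ x = addEdge G p.1 p.2 then P m G * stepProb θ m G p.1 p.2 else 0) := by
    intro G
    rw [Finset.sum_product]
    simp only [Finset.mul_sum, mul_ite, mul_zero]
  rw [tsum_congr h1]
  have hzero : ∀ p : Fin n × Fin n, ∀ G : Fin n → Fin n → ℕ, G ≠ remE x p.1 p.2 →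
      (if p.1 ≤ p.2 ∧ x = addEdge G p.1 p.2 then P m G * stepProb θ m G p.1 p.2 else 0) = 0 := by
    intro p G hG
    rw [if_neg]
    rintro ⟨-, h⟩
    exact hG (by rw [h, remE_addEdge])
  rw [Summable.tsum_finsetSum (fun p _ => summable_of_ne_finset_zero (s := {remE x p.1 p.2})
    (fun G hG => hzero p G (by simpa using hG)))]
  rw [Finset.sum_congr rfl (fun p _ => tsum_eq_single (remE x p.1 p.2) (hzero p))]
  rw [Finset.sum_product]

lemma key_off {n : ℕ} (hn : 0 < n) (θ : ℝ) (hθ : 0 < θ) (m : ℕ)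
    (x : Fin n → Fin n → ℕ) {i j : Fin n} (hij : i < j) (hx1 : 1 ≤ x i j)
    (hdi : 1 ≤ deg x i) (hdj : 1 ≤ deg x j)
    (hrj : deg (remE x i j) j + 1 = deg x j) :
    (((∏ k, riseR θ (deg (remE x i j) k)) / riseR (n * θ) (2 * m)) *
      (((2 * m)‼ : ℝ) /
        ((∏ p, ∏ q, if p < q then ((remE x i j p q)! : ℝ) else 1) *
          ∏ p, ((remE x i j p p)‼ : ℝ)))) * stepProb θ m (remE x i j) i j
    = (((∏ k, riseR θ (deg x k)) / riseR (n * θ) (2 * (m + 1))) *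
      (((2 * (m + 1))‼ : ℝ) /
        ((∏ p, ∏ q, if p < q then ((x p q)! : ℝ) else 1) * ∏ p, ((x p p)‼ : ℝ))))
      * ((x i j : ℝ) / (m + 1)) := by
  have hij' : i ≠ j := ne_of_lt hij
  set r := remE x i j with hr
  have hri : deg r i + 1 = deg x i := deg_remE_i hij' hx1
  -- rising factorial facts
  have hA : (∏ k, riseR θ (deg x k))
      = (∏ k, riseR θ (deg r k)) * ((θ + (deg r i : ℝ)) * (θ + (deg r j : ℝ))) := by
    have h2p := prod_two_point (fun k => riseR θ (deg r k)) (fun k => riseR θ (deg x k))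
      i j hij' (fun k h1 h2 => by
        show riseR θ (deg r k) = riseR θ (deg x k)
        rw [deg_remE_off x h1 h2])
    beta_reduce at h2p
    have e1 : riseR θ (deg x i) = riseR θ (deg r i) * (θ + (deg r i : ℝ)) := by
      rw [← hri, riseR_succ]
    have e2 : riseR θ (deg x j) = riseR θ (deg r j) * (θ + (deg r j : ℝ)) := by
      rw [← hrj, riseR_succ]
    rw [e1, e2] at h2p
    have hne1 : riseR θ (deg r i) ≠ 0 := ne_of_gt (riseR_pos hθ _)
    have hne2 : riseR θ (deg r j) ≠ 0 := ne_of_gt (riseR_pos hθ _)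
    refine mul_right_cancel₀ (mul_ne_zero hne1 hne2) ?_
    linear_combination -h2p
  have hB : riseR ((n : ℝ) * θ) (2 * (m + 1))
      = riseR ((n : ℝ) * θ) (2 * m) * (((n : ℝ) * θ + 2 * m) * ((n : ℝ) * θ + 2 * m + 1)) := by
    have h1 : 2 * (m + 1) = (2 * m + 1) + 1 := by ring
    rw [h1, riseR_succ, riseR_succ]
    push_cast; ring
  have hDF : (((2 * (m + 1))‼ : ℕ) : ℝ) = (2 * (m : ℝ) + 2) * (((2 * m)‼ : ℕ) : ℝ) := by
    have h1 : 2 * (m + 1) = 2 * m + 2 := by ring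
    rw [h1, Nat.doubleFactorial_add_two]
    push_cast; ring
  -- factorial product fact
  have hQ : (∏ p, ∏ q, if p < q then ((x p q)! : ℝ) else 1)
      = (∏ p, ∏ q, if p < q then ((r p q)! : ℝ) else 1) * (x i j : ℝ) := by
    have hoff : ∀ p, p ≠ i →
        (∏ q, if p < q then ((r p q)! : ℝ) else 1)
          = ∏ q, if p < q then ((x p q)! : ℝ) else 1 := by
      intro p hp
      refine Finset.prod_congr rfl fun q _ => ?_
      by_cases hpq : p < q
      · rw [if_pos hpq, if_pos hpq]
        have : r p q = x p q := by
          rw [hr, remE_apply x hij', if_neg, Nat.sub_zero]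
          rintro (⟨rfl, rfl⟩ | ⟨rfl, rfl⟩)
          · exact hp rfl
          · exact absurd hij (lt_asymm hpq)
        rw [this]
      · rw [if_neg hpq, if_neg hpq]
    have houter := prod_one_point
      (fun p => ∏ q, if p < q then ((r p q)! : ℝ) else 1)
      (fun p => ∏ q, if p < q then ((x p q)! : ℝ) else 1) i hoff
    beta_reduce at houter
    have hoffq : ∀ q, q ≠ j →
        (if i < q then ((r i q)! : ℝ) else 1) = (if i < q then ((x i q)! : ℝ) else 1) := by
      intro q hq
      by_cases hiq : i < q
      · rw [if_pos hiq, if_pos hiq]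
        have : r i q = x i q := by
          rw [hr, remE_apply x hij', if_neg, Nat.sub_zero]
          rintro (⟨-, rfl⟩ | ⟨rfl, -⟩)
          · exact hq rfl
          · exact hij'.symm rfl
        rw [this]
      · rw [if_neg hiq, if_neg hiq]
    have hinner := prod_one_point
      (fun q => if i < q then ((r i q)! : ℝ) else 1)
      (fun q => if i < q then ((x i q)! : ℝ) else 1) j hoffq
    simp only [if_pos hij] at hinner
    obtain ⟨c, hc⟩ : ∃ c, x i j = c + 1 := ⟨x i j - 1, by omega⟩
    have hrij : r i j = c := by
      rw [hr, remE_apply x hij', if_pos (Or.inl ⟨rfl, rfl⟩), hc]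
      omega
    rw [hrij, hc, Nat.factorial_succ] at hinner
    have hcne : ((c ! : ℕ) : ℝ) ≠ 0 := Nat.cast_ne_zero.2 (Nat.factorial_ne_zero c)
    have hFi : (∏ q, if i < q then ((r i q)! : ℝ) else 1) * ((x i j : ℝ))
        = ∏ q, if i < q then ((x i q)! : ℝ) else 1 := by
      refine mul_right_cancel₀ hcne ?_
      rw [hc]; push_cast at hinner ⊢; linear_combination hinner
    have hFipos : (0 : ℝ) < ∏ q, if i < q then ((r i q)! : ℝ) else 1 := by
      refine Finset.prod_pos fun q _ => ?_
      split_ifs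
      · exact_mod_cast Nat.factorial_pos _
      · exact one_pos
    refine (mul_right_cancel₀ (ne_of_gt hFipos) ?_).symm
    calc (∏ p, ∏ q, if p < q then ((r p q)! : ℝ) else 1) * (x i j : ℝ)
          * (∏ q, if i < q then ((r i q)! : ℝ) else 1)
        = (∏ p, ∏ q, if p < q then ((r p q)! : ℝ) else 1)
          * ((∏ q, if i < q then ((r i q)! : ℝ) else 1) * (x i j : ℝ)) := by ring
      _ = (∏ p, ∏ q, if p < q then ((r p q)! : ℝ) else 1)
          * (∏ q, if i < q then ((x i q)! : ℝ) else 1) := by rw [hFi]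
      _ = (∏ p, ∏ q, if p < q then ((x p q)! : ℝ) else 1)
          * (∏ q, if i < q then ((r i q)! : ℝ) else 1) := houter
  have hL : (∏ p, ((r p p)‼ : ℝ)) = ∏ p, ((x p p)‼ : ℝ) := by
    refine Finset.prod_congr rfl fun p _ => ?_
    have : r p p = x p p := by
      rw [hr, remE_apply x hij', if_neg, Nat.sub_zero]
      rintro (⟨rfl, rfl⟩ | ⟨rfl, rfl⟩) <;> exact hij' rfl
    rw [this]
  -- nonvanishing facts
  have hνpos : (0 : ℝ) < (n : ℝ) * θ := by
    have : (0 : ℝ) < (n : ℝ) := by exact_mod_cast hn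
    positivity
  have hBne : riseR ((n : ℝ) * θ) (2 * m) ≠ 0 := ne_of_gt (riseR_pos hνpos _)
  have hd1 : (2 * (m : ℝ) + (n : ℝ) * θ) ≠ 0 := by positivity
  have hd2 : (2 * (m : ℝ) + (n : ℝ) * θ + 1) ≠ 0 := by positivity
  have hQpos : (0 : ℝ) < ∏ p, ∏ q, if p < q then ((r p q)! : ℝ) else 1 := by
    refine Finset.prod_pos fun p _ => Finset.prod_pos fun q _ => ?_
    split_ifs
    · exact_mod_cast Nat.factorial_pos _
    · exact one_pos
  have hLpos : (0 : ℝ) < ∏ p, ((x p p)‼ : ℝ) := by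
    refine Finset.prod_pos fun p _ => ?_
    exact_mod_cast Nat.doubleFactorial_pos _
  have hm1 : ((m : ℝ) + 1) ≠ 0 := by positivity
  have hxne : (x i j : ℝ) ≠ 0 := by
    have : (0:ℝ) < x i j := by exact_mod_cast hx1
    exact ne_of_gt this
  rw [stepProb, if_neg hij', hA, hB, hDF, hQ, hL]
  field_simp
  ring

lemma key_diag {n : ℕ} (hn : 0 < n) (θ : ℝ) (hθ : 0 < θ) (m : ℕ)
    (x : Fin n → Fin n → ℕ) {i : Fin n} (hx2 : 2 ≤ x i i) :
    (((∏ k, riseR θ (deg (remE x i i) k)) / riseR (n * θ) (2 * m)) *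
      (((2 * m)‼ : ℝ) /
        ((∏ p, ∏ q, if p < q then ((remE x i i p q)! : ℝ) else 1) *
          ∏ p, ((remE x i i p p)‼ : ℝ)))) * stepProb θ m (remE x i i) i i
    = (((∏ k, riseR θ (deg x k)) / riseR (n * θ) (2 * (m + 1))) *
      (((2 * (m + 1))‼ : ℝ) /
        ((∏ p, ∏ q, if p < q then ((x p q)! : ℝ) else 1) * ∏ p, ((x p p)‼ : ℝ))))
      * ((x i i : ℝ) / (2 * (m + 1))) := by
  set r := remE x i i with hr
  have hri : deg r i + 2 = deg x i := deg_remE_diag hx2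
  have hA : (∏ k, riseR θ (deg x k))
      = (∏ k, riseR θ (deg r k)) * ((θ + (deg r i : ℝ)) * (θ + (deg r i : ℝ) + 1)) := by
    have h1p := prod_one_point (fun k => riseR θ (deg r k)) (fun k => riseR θ (deg x k))
      i (fun k hk => by
        show riseR θ (deg r k) = riseR θ (deg x k)
        rw [deg_remE_off x hk hk])
    beta_reduce at h1p
    have e1 : riseR θ (deg x i)
        = riseR θ (deg r i) * ((θ + (deg r i : ℝ)) * (θ + (deg r i : ℝ) + 1)) := by
      have h2 : deg x i = (deg r i + 1) + 1 := by omega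
      rw [h2, riseR_succ, riseR_succ]
      push_cast; ring
    rw [e1] at h1p
    have hne1 : riseR θ (deg r i) ≠ 0 := ne_of_gt (riseR_pos hθ _)
    refine mul_right_cancel₀ hne1 ?_
    linear_combination -h1p
  have hB : riseR ((n : ℝ) * θ) (2 * (m + 1))
      = riseR ((n : ℝ) * θ) (2 * m) * (((n : ℝ) * θ + 2 * m) * ((n : ℝ) * θ + 2 * m + 1)) := by
    have h1 : 2 * (m + 1) = (2 * m + 1) + 1 := by ring
    rw [h1, riseR_succ, riseR_succ]
    push_cast; ring
  have hDF : (((2 * (m + 1))‼ : ℕ) : ℝ) = (2 * (m : ℝ) + 2) * (((2 * m)‼ : ℕ) : ℝ) := by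
    have h1 : 2 * (m + 1) = 2 * m + 2 := by ring
    rw [h1, Nat.doubleFactorial_add_two]
    push_cast; ring
  have hQ : (∏ p, ∏ q, if p < q then ((x p q)! : ℝ) else 1)
      = (∏ p, ∏ q, if p < q then ((r p q)! : ℝ) else 1) := by
    refine Finset.prod_congr rfl fun p _ => Finset.prod_congr rfl fun q _ => ?_
    by_cases hpq : p < q
    · rw [if_pos hpq, if_pos hpq]
      have : r p q = x p q := by
        rw [hr, remE_diag_apply x i, if_neg, Nat.sub_zero]
        rintro ⟨rfl, rfl⟩
        exact absurd hpq (lt_irrefl _)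
      rw [this]
    · rw [if_neg hpq, if_neg hpq]
  have hL : (∏ p, ((x p p)‼ : ℝ)) = (∏ p, ((r p p)‼ : ℝ)) * (x i i : ℝ) := by
    have h1p := prod_one_point (fun p => ((r p p)‼ : ℝ)) (fun p => ((x p p)‼ : ℝ))
      i (fun k hk => by
        show ((r k k)‼ : ℝ) = ((x k k)‼ : ℝ)
        rw [hr, remE_diag_apply x i, if_neg (by tauto), Nat.sub_zero])
    beta_reduce at h1p
    obtain ⟨c, hc⟩ : ∃ c, x i i = c + 2 := ⟨x i i - 2, by omega⟩
    have hrii : r i i = c := by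
      rw [hr, remE_diag_apply x i, if_pos ⟨rfl, rfl⟩, hc]
      omega
    rw [hrii, hc, Nat.doubleFactorial_add_two] at h1p
    have hcne : ((c‼ : ℕ) : ℝ) ≠ 0 := by
      have : (0:ℝ) < ((c‼ : ℕ) : ℝ) := by exact_mod_cast Nat.doubleFactorial_pos c
      exact ne_of_gt this
    refine (mul_right_cancel₀ hcne ?_).symm
    rw [hc]; push_cast at h1p ⊢; linear_combination h1p
  have hνpos : (0 : ℝ) < (n : ℝ) * θ := by
    have : (0 : ℝ) < (n : ℝ) := by exact_mod_cast hn
    positivity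
  have hBne : riseR ((n : ℝ) * θ) (2 * m) ≠ 0 := ne_of_gt (riseR_pos hνpos _)
  have hd1 : (2 * (m : ℝ) + (n : ℝ) * θ) ≠ 0 := by positivity
  have hd2 : (2 * (m : ℝ) + (n : ℝ) * θ + 1) ≠ 0 := by positivity
  have hQpos : (0 : ℝ) < ∏ p, ∏ q, if p < q then ((r p q)! : ℝ) else 1 := by
    refine Finset.prod_pos fun p _ => Finset.prod_pos fun q _ => ?_
    split_ifs
    · exact_mod_cast Nat.factorial_pos _
    · exact one_pos
  have hLpos : (0 : ℝ) < ∏ p, ((r p p)‼ : ℝ) := by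
    refine Finset.prod_pos fun p _ => ?_
    exact_mod_cast Nat.doubleFactorial_pos _
  have hm1 : ((m : ℝ) + 1) ≠ 0 := by positivity
  have hxne : (x i i : ℝ) ≠ 0 := by
    have : (0:ℝ) < x i i := by exact_mod_cast (by omega : 0 < x i i)
    exact ne_of_gt this
  rw [stepProb, if_pos rfl, hA, hB, hDF, hQ, hL]
  field_simp
  ring

lemma weight_sum {n : ℕ} (m : ℕ) (x : Fin n → Fin n → ℕ)
    (hsym : ∀ p q, x p q = x q p)
    (hsum : ∑ i, ∑ j, x i j = 2 * (m + 1)) :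
    ∑ i, ∑ j, (if i = j then (x i i : ℝ) / (2 * (m + 1))
      else if i < j then (x i j : ℝ) / (m + 1) else 0) = 1 := by
  have hC : (2 * ((m : ℝ) + 1)) ≠ 0 := by positivity
  refine mul_right_cancel₀ hC ?_
  rw [one_mul]
  have key : ∀ i j : Fin n, (if i = j then (x i i : ℝ) / (2 * (m + 1))
      else if i < j then (x i j : ℝ) / (m + 1) else 0) * (2 * ((m : ℝ) + 1))
      = (if i = j then (x i j : ℝ) else 0) + (if i < j then (x i j : ℝ) else 0)
        + (if i < j then (x j i : ℝ) else 0) := by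
    intro i j
    rcases lt_trichotomy i j with h | h | h
    · rw [if_neg h.ne, if_pos h, if_neg h.ne, if_pos h, if_pos h, hsym j i]
      have hm : ((m : ℝ) + 1) ≠ 0 := by positivity
      field_simp
      ring
    · subst h
      simp only [if_pos rfl, lt_irrefl, if_false, ↓reduceIte, add_zero]
      field_simp
    · rw [if_neg h.ne', if_neg (asymm h), if_neg h.ne', if_neg (asymm h),
        if_neg (asymm h)]
      ring
  calc (∑ i, ∑ j, (if i = j then (x i i : ℝ) / (2 * (m + 1))
          else if i < j then (x i j : ℝ) / (m + 1) else 0)) * (2 * ((m : ℝ) + 1))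
      = ∑ i, ∑ j, ((if i = j then (x i j : ℝ) else 0) + (if i < j then (x i j : ℝ) else 0)
          + (if i < j then (x j i : ℝ) else 0)) := by
        simp_rw [Finset.sum_mul]
        exact Finset.sum_congr rfl fun i _ => Finset.sum_congr rfl fun j _ => key i j
    _ = (∑ i, ∑ j, (if i = j then (x i j : ℝ) else 0))
        + (∑ i, ∑ j, (if i < j then (x i j : ℝ) else 0))
        + ∑ i, ∑ j, (if i < j then (x j i : ℝ) else 0) := by
        simp_rw [Finset.sum_add_distrib]
    _ = (∑ i, ∑ j, (if i = j then (x i j : ℝ) else 0))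
        + (∑ i, ∑ j, (if i < j then (x i j : ℝ) else 0))
        + ∑ i, ∑ j, (if j < i then (x i j : ℝ) else 0) := by
        rw [show (∑ i, ∑ j, (if i < j then (x j i : ℝ) else 0))
          = ∑ j, ∑ i, (if i < j then (x j i : ℝ) else 0) from Finset.sum_comm]
    _ = ∑ i, ∑ j, (x i j : ℝ) := by
        simp_rw [← Finset.sum_add_distrib]
        refine Finset.sum_congr rfl fun i _ => Finset.sum_congr rfl fun j _ => ?_
        rcases lt_trichotomy i j with h | h | h
        · rw [if_neg h.ne, if_pos h, if_neg (asymm h)]; ring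
        · subst h
          simp
        · rw [if_neg h.ne', if_neg (asymm h), if_pos h]; ring
    _ = 2 * ((m : ℝ) + 1) := by
        have := congrArg (fun t : ℕ => (t : ℝ)) hsum
        push_cast at this
        linarith [this]

theorem stmt_10 {n : ℕ} (hn : 0 < n) (θ : ℝ) (hθ : 0 < θ)
    (P : ℕ → (Fin n → Fin n → ℕ) → ℝ) (hP : IsGrowthLaw θ P)
    (m : ℕ) (d : Fin n → ℕ) (hd : ∑ i, d i = 2 * m)
    (x : Fin n → Fin n → ℕ) (hsym : ∀ i j, x i j = x j i)
    (heven : ∀ i, Even (x i i)) (hdeg : ∀ i, deg x i = d i) :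
    P m x = ((∏ i, riseR θ (d i)) / riseR (n * θ) (2 * m)) *
      (((2 * m)‼ : ℝ) /
        ((∏ i, ∏ j, if i < j then ((x i j)! : ℝ) else 1) * ∏ i, ((x i i)‼ : ℝ))) := by
  obtain ⟨h0, hrec⟩ := hP
  induction m generalizing d x with
  | zero =>
    have hd0 : ∀ i, d i = 0 := fun i =>
      Finset.sum_eq_zero_iff.1 (by simpa using hd) i (mem_univ i)
    have hx0 : x = fun _ _ => 0 := by
      funext p q
      have h2 : deg x p = 0 := by rw [hdeg p, hd0 p]
      exact Finset.sum_eq_zero_iff.1 h2 q (mem_univ q)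
    subst hx0
    rw [h0 _, if_pos rfl]
    simp [riseR, hd0]
  | succ m ih =>
    rw [step_eq θ P hrec m x]
    have hsum2 : ∑ i, ∑ j, x i j = 2 * (m + 1) := by
      have h1 : ∑ i, deg x i = 2 * (m + 1) := by
        rw [Finset.sum_congr rfl fun i _ => hdeg i]; exact hd
      simpa [deg] using h1
    have hterm : ∀ i j : Fin n, (if i ≤ j ∧ x = addEdge (remE x i j) i j then
        P m (remE x i j) * stepProb θ m (remE x i j) i j else 0)
        = (((∏ i, riseR θ (d i)) / riseR (n * θ) (2 * (m + 1))) *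
            (((2 * (m + 1))‼ : ℝ) /
              ((∏ i, ∏ j, if i < j then ((x i j)! : ℝ) else 1) * ∏ i, ((x i i)‼ : ℝ)))) *
          (if i = j then (x i i : ℝ) / (2 * (m + 1))
            else if i < j then (x i j : ℝ) / (m + 1) else 0) := by
      intro i j
      simp only [← hdeg]
      rcases lt_trichotomy i j with h | h | h
      · -- off-diagonal
        rw [if_neg h.ne, if_pos h]
        by_cases hx1 : 1 ≤ x i j
        · have hx2 : 1 ≤ x j i := by rw [hsym j i]; exact hx1
          have e1 : deg (remE x i j) i + 1 = deg x i := deg_remE_i h.ne hx1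
          have e2 : deg (remE x i j) j + 1 = deg x j := by
            rw [remE_comm]; exact deg_remE_i h.ne' hx2
          rw [if_pos ⟨le_of_lt h, (addEdge_remE_ne h.ne hx1 hx2).symm⟩]
          have hsr : ∀ p q, remE x i j p q = remE x i j q p := remE_symm hsym i j
          have hevr : ∀ p, Even (remE x i j p p) := by
            intro p
            have hpp : remE x i j p p = x p p := by
              rw [remE_apply x h.ne, if_neg, Nat.sub_zero]
              rintro (⟨rfl, rfl⟩ | ⟨rfl, rfl⟩) <;> exact h.ne rfl
            rw [hpp]; exact heven p
          have hsumr : ∑ k, deg (remE x i j) k = 2 * m := by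
            have h2 := sum_two_point (deg (remE x i j)) (deg x) i j h.ne
              (fun k hk1 hk2 => deg_remE_off x hk1 hk2)
            have h3 : ∑ k, deg x k = 2 * (m + 1) := by
              rw [Finset.sum_congr rfl fun i _ => hdeg i]; exact hd
            omega
          rw [ih (deg (remE x i j)) hsumr (remE x i j) hsr hevr (fun k => rfl)]
          exact key_off hn θ hθ m x h hx1 (by omega) (by omega) e2
        · have hx0 : x i j = 0 := by omega
          rw [if_neg, hx0]
          · norm_num
          · rintro ⟨-, hEq⟩
            have h5 := congrFun (congrFun hEq i) j
            simp [addEdge, h.ne] at h5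
            omega
      · -- diagonal
        subst h
        rw [if_pos rfl]
        by_cases hx2 : 2 ≤ x i i
        · have e1 : deg (remE x i i) i + 2 = deg x i := deg_remE_diag hx2
          rw [if_pos ⟨le_refl i, (addEdge_remE_diag hx2).symm⟩]
          have hsr : ∀ p q, remE x i i p q = remE x i i q p := remE_symm hsym i i
          have hevr : ∀ p, Even (remE x i i p p) := by
            intro p
            rw [remE_diag_apply x i]
            by_cases hp : p = i
            · subst hp
              rw [if_pos ⟨rfl, rfl⟩]
              obtain ⟨c, hc⟩ := heven p
              exact ⟨c - 1, by omega⟩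
            · rw [if_neg (by tauto), Nat.sub_zero]; exact heven p
          have hsumr : ∑ k, deg (remE x i i) k = 2 * m := by
            have h2 := sum_one_point (deg (remE x i i)) (deg x) i
              (fun k hk => deg_remE_off x hk hk)
            have h3 : ∑ k, deg x k = 2 * (m + 1) := by
              rw [Finset.sum_congr rfl fun i _ => hdeg i]; exact hd
            omega
          rw [ih (deg (remE x i i)) hsumr (remE x i i) hsr hevr (fun k => rfl)]
          exact key_diag hn θ hθ m x hx2
        · have hx0 : x i i = 0 := by
            obtain ⟨c, hc⟩ := heven i; omega
          rw [if_neg, hx0]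
          · norm_num
          · rintro ⟨-, hEq⟩
            have h5 := congrFun (congrFun hEq i) i
            simp [addEdge] at h5
            omega
      · -- j < i
        rw [if_neg (fun hc => absurd hc.1 (not_le_of_gt h)), if_neg h.ne',
          if_neg (asymm h), mul_zero]
    rw [Finset.sum_congr rfl fun i _ => Finset.sum_congr rfl fun j _ => hterm i j]
    simp_rw [← Finset.mul_sum]
    rw [weight_sum m x hsym hsum2, mul_one]
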